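/- In the setup below, suppose additionally that c(n,m,i) ∈ R (for 1 ≤ n ≤ m and 0 ≤ i ≤ n) satisfy ε_n·ε_m = Σ_{i=0}^{n} c(n,m,i)·ε_{m+i} for every pair 1 ≤ n ≤ m, and that for every pair 1 ≤ n ≤ m the family (ε_m, ε_{m+1}, …, ε_{m+n}) is R-linearly independent in A. Then for all 1 ≤ n ≤ m and 0 ≤ i ≤ n: n!·c(n,m,i) = ((m+i)!/m!)·h_{n−i}(q_m, …, q_{m+i}) − Σ_{k=max(i,1)}^{n−1} k!·h_{n−k}(q₁, …, q_k)·c(k,m,i). -/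

import Mathlib

open Finset

/-- `hsum d s x` is the complete homogeneous symmetric polynomial of degree `d` in the
variables `x i`, `i ∈ s`: the sum of all monomials of degree `d` in these variables
(with `hsum 0 s x = 1`). -/
def hsum {R : Type*} [CommSemiring R] (d : ℕ) (s : Finset ℕ) (x : ℕ → R) : R :=
  ∑ μ ∈ s.sym d, ((μ : Multiset ℕ).map x).prod

lemma hsum_zero {R : Type*} [CommSemiring R] (s : Finset ℕ) (x : ℕ → R) : hsum 0 s x = 1 := by
  rw [hsum, Finset.sym_zero, Finset.sum_singleton]
  rfl

lemma hsum_empty {R : Type*} [CommSemiring R] (d : ℕ) (x : ℕ → R) :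
    hsum (d + 1) (∅ : Finset ℕ) x = 0 := by
  simp [hsum]

lemma hsum_succ_insert {R : Type*} [CommSemiring R] (d : ℕ) {r : ℕ} {t : Finset ℕ}
    (hr : r ∉ t) (x : ℕ → R) :
    hsum (d + 1) (insert r t) x = x r * hsum d (insert r t) x + hsum (d + 1) t x := by
  classical
  have h1 : ((insert r t).sym (d+1)).filter (fun μ => r ∈ μ)
      = ((insert r t).sym d).image (Sym.cons r) := by
    ext μ
    simp only [mem_filter, mem_image, mem_sym_iff]
    constructor
    · rintro ⟨hall, hmem⟩
      refine ⟨μ.erase r hmem, fun a ha => ?_, Sym.cons_erase hmem⟩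
      exact hall a (Multiset.mem_of_mem_erase ha)
    · rintro ⟨ν, hν, rfl⟩
      refine ⟨fun a ha => ?_, Sym.mem_cons_self r ν⟩
      rcases Sym.mem_cons.1 ha with h | h
      · exact h ▸ mem_insert_self r t
      · exact hν a h
  have h2 : ((insert r t).sym (d+1)).filter (fun μ => r ∉ μ) = t.sym (d+1) := by
    ext μ
    simp only [mem_filter, mem_sym_iff, mem_insert]
    constructor
    · rintro ⟨hall, hmem⟩
      intro a ha
      rcases hall a ha with h | h
      · exact absurd (h ▸ ha) hmem
      · exact h
    · intro h
      exact ⟨fun a ha => Or.inr (h a ha), fun hmem => hr (h r hmem)⟩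
  rw [hsum, ← Finset.sum_filter_add_sum_filter_not ((insert r t).sym (d+1)) (fun μ => r ∈ μ),
    h1, h2, Finset.sum_image (fun a _ b _ h => (Sym.cons_inj_right r a b).1 h)]
  congr 1
  rw [hsum, Finset.mul_sum]
  refine Finset.sum_congr rfl fun ν _ => ?_
  rw [Sym.coe_cons, Multiset.map_cons, Multiset.prod_cons]

lemma Icc_succ_insert {a b : ℕ} (h : a ≤ b + 1) :
    Icc a (b + 1) = insert (b + 1) (Icc a b) := by
  ext k
  simp only [mem_Icc, mem_insert]
  omega

lemma key {R A : Type*} [CommRing R] [CommRing A] [Algebra R A]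
    (q : ℕ → R) (ε : ℕ → A)
    (hchev : ∀ m : ℕ, 1 ≤ m → ε 1 * ε m = q m • ε m + (m + 1) • ε (m + 1)) :
    ∀ n m : ℕ, 1 ≤ m → ε 1 ^ n * ε m
      = ∑ i ∈ range (n + 1),
          ((m + i).descFactorial i) • (hsum (n - i) (Icc m (m + i)) q • ε (m + i)) := by
  intro n
  induction n with
  | zero =>
      intro m hm
      simp [hsum_zero]
  | succ n ih =>
      intro m hm
      set F : ℕ → A := fun i => ((m + i).descFactorial i) •
        (hsum (n + 1 - i) (Icc m (m + i)) q • ε (m + i)) with hF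
      set G : ℕ → A := fun i => ((m + i).descFactorial i) •
        ((q (m + i) * hsum (n - i) (Icc m (m + i)) q) • ε (m + i)) with hG
      set H : ℕ → A := fun i => ((m + i + 1) * (m + i).descFactorial i) •
        (hsum (n - i) (Icc m (m + i)) q • ε (m + i + 1)) with hH
      have step : ε 1 ^ (n+1) * ε m = ∑ i ∈ range (n + 1), (G i + H i) := by
        rw [pow_succ', mul_assoc, ih m hm, Finset.mul_sum]
        refine Finset.sum_congr rfl fun i _ => ?_
        rw [mul_smul_comm, mul_smul_comm, hchev (m+i) (le_trans hm (Nat.le_add_right m i))]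
        rw [smul_add, smul_add]
        simp only [hG, hH]
        congr 1
        · rw [smul_smul, mul_comm]
        · rw [smul_comm (hsum (n - i) (Icc m (m + i)) q) (m+i+1), ← mul_smul,
            Nat.mul_comm]
      have h0 : F 0 = G 0 := by
        simp only [hF, hG, Nat.add_zero, Nat.sub_zero, Nat.descFactorial_zero, one_smul]
        rw [show (Icc m m) = insert m (∅ : Finset ℕ) by simp,
          hsum_succ_insert _ (Finset.notMem_empty m), hsum_empty, add_zero]
      have htop : F (n+1) = H n := by
        simp only [hF, hH, Nat.sub_self, Nat.add_sub_cancel_left]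
        rw [show m + (n+1) = (m+n) + 1 by omega, Nat.succ_descFactorial_succ]
        simp [hsum_zero]
      have hmid : ∀ i ∈ range n, F (i+1) = G (i+1) + H i := by
        intro i hi
        rw [mem_range] at hi
        have hd : (m + (i+1)).descFactorial (i+1) = (m + i + 1) * (m + i).descFactorial i := by
          rw [show m + (i+1) = (m+i) + 1 by omega, Nat.succ_descFactorial_succ]
        have hIcc : Icc m (m + (i+1)) = insert (m + i + 1) (Icc m (m + i)) := by
          rw [show m + (i+1) = (m + i) + 1 by omega, Icc_succ_insert (by omega)]
        have hnot : m + i + 1 ∉ Icc m (m + i) := by simp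
        have hdeg : n + 1 - (i+1) = (n - (i+1)) + 1 := by omega
        have hdeg2 : n - (i+1) + 1 = n - i := by omega
        simp only [hF, hG, hH]
        rw [hdeg, hIcc, hsum_succ_insert _ hnot, hdeg2, hd, add_smul, smul_add]
        rfl
      rw [step]
      symm
      calc ∑ i ∈ range (n + 1 + 1), F i
          = ∑ i ∈ range (n + 1), F (i+1) + F 0 := Finset.sum_range_succ' F (n+1)
        _ = (∑ i ∈ range n, F (i+1) + F (n+1)) + F 0 := by rw [Finset.sum_range_succ]
        _ = (∑ i ∈ range n, (G (i+1) + H i) + H n) + G 0 := by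
            rw [htop, h0, Finset.sum_congr rfl hmid]
        _ = (∑ i ∈ range n, G (i+1) + G 0) + (∑ i ∈ range n, H i + H n) := by
            rw [Finset.sum_add_distrib]; abel
        _ = ∑ i ∈ range (n + 1), G i + ∑ i ∈ range (n + 1), H i := by
            rw [← Finset.sum_range_succ' G n, ← Finset.sum_range_succ H n]
        _ = ∑ i ∈ range (n + 1), (G i + H i) := (Finset.sum_add_distrib).symm

lemma desc_fact_one : ∀ j : ℕ, (1 + j).descFactorial j = (1 + j).factorial
  | 0 => rfl
  | j+1 => by
      rw [show 1 + (j+1) = (1+j) + 1 from rfl, Nat.succ_descFactorial_succ,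
        desc_fact_one j, ← Nat.factorial_succ]

lemma pow_eps {R A : Type*} [CommRing R] [CommRing A] [Algebra R A]
    (q : ℕ → R) (ε : ℕ → A)
    (hchev : ∀ m : ℕ, 1 ≤ m → ε 1 * ε m = q m • ε m + (m + 1) • ε (m + 1)) (n : ℕ) :
    ε 1 ^ (n + 1) = ∑ k ∈ Icc 1 (n + 1), k.factorial • (hsum (n + 1 - k) (Icc 1 k) q • ε k) := by
  rw [← Finset.Ico_add_one_right_eq_Icc, Finset.sum_Ico_eq_sum_range]
  have : n + 1 + 1 - 1 = n + 1 := rfl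
  rw [this, pow_succ, key q ε hchev n 1 le_rfl]
  refine Finset.sum_congr rfl fun j _ => ?_
  have hdeg : n - j = n + 1 - (1 + j) := by omega
  rw [desc_fact_one j, hdeg]

/-- Given the Chevalley relation, structure constants `c n m i` with
`ε_n·ε_m = Σ_{i=0}^{n} c(n,m,i)·ε_{m+i}` for `1 ≤ n ≤ m`, and linear independence of
`(ε_m, …, ε_{m+n})`, the structure constants satisfy the recursion
`n!·c(n,m,i) = ((m+i)!/m!)·h_{n−i}(q_m,…,q_{m+i}) − Σ_{k=max(i,1)}^{n−1} k!·h_{n−k}(q₁,…,q_k)·c(k,m,i)`. -/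
theorem stmt17 {R A : Type*} [CommRing R] [CommRing A] [Algebra R A]
    (q : ℕ → R) (ε : ℕ → A)
    (hchev : ∀ m : ℕ, 1 ≤ m → ε 1 * ε m = q m • ε m + (m + 1) • ε (m + 1))
    (c : ℕ → ℕ → ℕ → R)
    (hc : ∀ n m : ℕ, 1 ≤ n → n ≤ m →
      ε n * ε m = ∑ i ∈ range (n + 1), c n m i • ε (m + i))
    (hli : ∀ n m : ℕ, 1 ≤ n → n ≤ m →
      LinearIndependent R (fun i : Fin (n + 1) => ε (m + (i : ℕ)))) :
    ∀ n m i : ℕ, 1 ≤ n → n ≤ m → i ≤ n →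
      n.factorial • c n m i
        = ((m + i).factorial / m.factorial) • hsum (n - i) (Icc m (m + i)) q
          - ∑ k ∈ Icc (max i 1) (n - 1), k.factorial • (hsum (n - k) (Icc 1 k) q * c k m i) := by
  intro n m i hn hm hi
  obtain ⟨N, rfl⟩ : ∃ N, n = N + 1 := ⟨n - 1, by omega⟩
  set α : ℕ → R := fun i' => ((m + i').descFactorial i') • hsum (N + 1 - i') (Icc m (m + i')) q
    with hα
  set β : ℕ → R := fun i' =>
    ∑ k ∈ Icc (max i' 1) (N + 1), k.factorial • (hsum (N + 1 - k) (Icc 1 k) q * c k m i')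
    with hβ
  have hA : ε 1 ^ (N + 1) * ε m = ∑ i' ∈ range (N + 2), α i' • ε (m + i') := by
    rw [key q ε hchev (N+1) m (le_trans hn hm)]
    refine Finset.sum_congr rfl fun i' _ => ?_
    rw [hα, smul_assoc]
  have hB : ε 1 ^ (N + 1) * ε m = ∑ i' ∈ range (N + 2), β i' • ε (m + i') := by
    rw [pow_eps q ε hchev N, Finset.sum_mul]
    have step1 : ∀ k ∈ Icc 1 (N + 1),
        (k.factorial • (hsum (N + 1 - k) (Icc 1 k) q • ε k)) * ε m
          = ∑ i' ∈ range (N + 2),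
              (if i' ≤ k then (k.factorial • (hsum (N + 1 - k) (Icc 1 k) q * c k m i')) else 0)
                • ε (m + i') := by
      intro k hk
      rw [mem_Icc] at hk
      rw [smul_mul_assoc, smul_mul_assoc, hc k m hk.1 (le_trans hk.2 hm), Finset.smul_sum,
        Finset.smul_sum]
      rw [show ∑ i' ∈ range (k + 1),
            k.factorial • hsum (N + 1 - k) (Icc 1 k) q • c k m i' • ε (m + i')
          = ∑ i' ∈ range (k + 1),
            (if i' ≤ k then (k.factorial • (hsum (N + 1 - k) (Icc 1 k) q * c k m i')) else 0)
              • ε (m + i') from Finset.sum_congr rfl fun i' hi' => by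
          rw [mem_range] at hi'
          rw [if_pos (by omega), smul_assoc, smul_smul]]
      refine Finset.sum_subset (by intro x hx; rw [mem_range] at *; omega) ?_
      intro x hx hx2
      rw [mem_range] at hx hx2
      rw [if_neg (by omega), zero_smul]
    rw [Finset.sum_congr rfl step1, Finset.sum_comm]
    refine Finset.sum_congr rfl fun i' _ => ?_
    have : ∀ k, (if i' ≤ k then (k.factorial • (hsum (N + 1 - k) (Icc 1 k) q * c k m i'))
        else 0) • ε (m + i')
        = (if i' ≤ k then (k.factorial • (hsum (N + 1 - k) (Icc 1 k) q * c k m i'))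
            else 0) • ε (m + i') := fun _ => rfl
    rw [← Finset.sum_smul, hβ]
    congr 1
    rw [← Finset.sum_filter, show (Icc 1 (N+1)).filter (fun k => i' ≤ k)
      = Icc (max i' 1) (N + 1) from by ext k; simp only [mem_filter, mem_Icc]; omega]
  have heq : ∀ i' : Fin (N + 2), α i' - β i' = 0 := by
    apply (Fintype.linearIndependent_iff.mp (hli (N + 1) m hn hm))
    rw [Fin.sum_univ_eq_sum_range (fun i' => (α i' - β i') • ε (m + i'))]
    simp only [sub_smul, Finset.sum_sub_distrib, ← hA, ← hB, sub_self]
  have hab : α i = β i := by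
    have := heq ⟨i, by omega⟩
    simpa [sub_eq_zero] using this
  have hsplit : β i = (N + 1).factorial • c (N + 1) m i
      + ∑ k ∈ Icc (max i 1) N, k.factorial • (hsum (N + 1 - k) (Icc 1 k) q * c k m i) := by
    simp only [hβ]
    rw [Icc_succ_insert (by omega), Finset.sum_insert (by simp), Nat.sub_self, hsum_zero,
      one_mul]
  have hαi : α i = ((m + i).factorial / m.factorial) • hsum (N + 1 - i) (Icc m (m + i)) q := by
    simp only [hα]
    congr 1
    rw [Nat.descFactorial_eq_div (Nat.le_add_left i m), Nat.add_sub_cancel]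
  rw [show N + 1 - 1 = N from rfl, ← hαi, hab, hsplit]
  ring
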